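/- Under the same assumptions, with a = (w(k₁), w(k₂), ..., w(k_r), 1)ᵀ the activity vector and v₁ defined by the recursion v_{1,i} = (f(k_i) + ∑_{j<i} w(k_j)g(k_i − k_j)v_{1,j})/(λ₁ + w(k_i)(1 − g(0))) and v_{1,r+1} = 1 − ∑_{j=1}^r w(k_j)v_{1,j}, the inner product a · v₁ = 1 holds. Moreover, if λ₁ is a simple eigenvalue of A, then v₁ is the unique right eigenvector of A for λ₁ normalized by a · v₁ = 1. -/

import Mathlib

open Finset Matrix

open Polynomial in

lemma two_le_rootMultiplicity_of_indep {n : ℕ} (A : Matrix (Fin n) (Fin n) ℝ) (lam : ℝ)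
    (x y : Fin n → ℝ) (hx : A.mulVec x = lam • x) (hy : A.mulVec y = lam • y)
    (hindep : LinearIndependent ℝ ![x, y]) :
    2 ≤ Polynomial.rootMultiplicity lam A.charpoly := by
  classical
  set φ := Matrix.toLin (Pi.basisFun ℝ (Fin n)) (Pi.basisFun ℝ (Fin n)) A with hφ
  have hφapp : ∀ z, φ z = A.mulVec z := by
    intro z
    simp [hφ, Matrix.toLin_eq_toLin', Matrix.toLin'_apply]
  have hchar : A.charpoly = φ.charpoly := by
    rw [← LinearMap.charpoly_toMatrix φ (Pi.basisFun ℝ (Fin n)), hφ,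
      LinearMap.toMatrix_toLin]
  have hs : LinearIndepOn ℝ id (Set.range ![x, y]) :=
    (linearIndepOn_id_range_iff hindep.injective).mpr hindep
  let b := Module.Basis.extend hs
  haveI : Fintype ↥(hs.extend (Set.subset_univ _)) :=
    FiniteDimensional.fintypeBasisIndex b
  have hxmem : x ∈ hs.extend (Set.subset_univ _) :=
    hs.subset_extend _ ⟨0, rfl⟩
  have hymem : y ∈ hs.extend (Set.subset_univ _) :=
    hs.subset_extend _ ⟨1, rfl⟩
  set ix : ↥(hs.extend (Set.subset_univ _)) := ⟨x, hxmem⟩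
  set iy : ↥(hs.extend (Set.subset_univ _)) := ⟨y, hymem⟩
  have hxy : x ≠ y := by
    intro h
    have h01 : (0 : Fin 2) = 1 := hindep.injective (by simpa using h)
    exact absurd h01 (by decide)
  have hixiy : ix ≠ iy := by
    intro h
    exact hxy (congrArg Subtype.val h)
  set Mm := LinearMap.toMatrix b b φ with hMm
  have hbx : b ix = x := Module.Basis.extend_apply_self hs ix
  have hby : b iy = y := Module.Basis.extend_apply_self hs iy
  have hcolx : ∀ i, Mm i ix = if i = ix then lam else 0 := by
    intro i
    have e1 : φ (b ix) = lam • b ix := by rw [hbx, hφapp, hx]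
    rw [hMm, LinearMap.toMatrix_apply, e1, _root_.map_smul, b.repr_self]
    simp [Finsupp.single_apply, Finsupp.smul_apply, eq_comm]
  have hcoly : ∀ i, Mm i iy = if i = iy then lam else 0 := by
    intro i
    have e1 : φ (b iy) = lam • b iy := by rw [hby, hφapp, hy]
    rw [hMm, LinearMap.toMatrix_apply, e1, _root_.map_smul, b.repr_self]
    simp [Finsupp.single_apply, Finsupp.smul_apply, eq_comm]
  set p : ℝ[X] := X - C lam with hp
  set cm := charmatrix Mm with hcm
  set ex : ↥(hs.extend (Set.subset_univ _)) → ℝ[X] := fun i => if i = ix then 1 else 0 with hex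
  set ey : ↥(hs.extend (Set.subset_univ _)) → ℝ[X] := fun i => if i = iy then 1 else 0 with hey
  have hcmx : ∀ i, cm i ix = (p • ex) i := by
    intro i
    rw [hcm, charmatrix_apply, hcolx i]
    rcases eq_or_ne i ix with rfl | h
    · simp [hex, hp]
    · simp [hex, h, Matrix.diagonal_apply_ne _ h]
  have hcmy : ∀ i, cm i iy = (p • ey) i := by
    intro i
    rw [hcm, charmatrix_apply, hcoly i]
    rcases eq_or_ne i iy with rfl | h
    · simp [hey, hp]
    · simp [hey, h, Matrix.diagonal_apply_ne _ h]
  have hdvd : p ^ 2 ∣ cm.det := by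
    have e1 : cm = cm.updateCol ix (p • ex) := by
      ext i j
      rcases eq_or_ne j ix with rfl | hj
      · rw [Matrix.updateCol_apply, if_pos rfl, hcmx i]
      · rw [Matrix.updateCol_apply, if_neg hj]
    set cm1 := cm.updateCol ix ex with hcm1
    have d1 : cm.det = p * cm1.det := by
      conv_lhs => rw [e1]
      rw [Matrix.det_updateCol_smul]
    have e2 : cm1 = cm1.updateCol iy (p • ey) := by
      ext i j
      rcases eq_or_ne j iy with rfl | hj
      · rw [Matrix.updateCol_apply, if_pos rfl, hcm1,
          Matrix.updateCol_apply, if_neg (Ne.symm hixiy), hcmy i]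
      · rw [Matrix.updateCol_apply, if_neg hj]
    have d2 : cm1.det = p * (cm1.updateCol iy ey).det := by
      conv_lhs => rw [e2]
      rw [Matrix.det_updateCol_smul]
    rw [d1, d2, pow_two]
    exact mul_dvd_mul_left p (Dvd.intro _ rfl)
  have hdvd' : (X - C lam) ^ 2 ∣ A.charpoly := by
    have hdet : cm.det = Mm.charpoly := rfl
    rw [hchar, ← LinearMap.charpoly_toMatrix φ b, ← hMm, ← hdet]
    exact hdvd
  rw [← Polynomial.le_rootMultiplicity_iff (Matrix.charpoly_monic A).ne_zero] at hdvd'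
  exact hdvd'

/-- The eigenvector `v₁` satisfies the normalization `a · v₁ = 1` with the
activity vector `a = (w(k₁),…,w(k_r),1)`, and if `λ₁` is a simple eigenvalue of
`A` then `v₁` is the unique right eigenvector of `A` for `λ₁` with `a · v₁ = 1`. -/
theorem stmt_2
    (r : ℕ) (hr : 0 < r)
    (χ ρ : ℝ) (f g : ℕ → ℝ)
    (k : Fin r → ℕ) (hk1 : ∀ i, 1 ≤ k i) (hkmono : StrictMono k)
    (w : ℕ → ℝ) (hw : ∀ n, w n = χ * n + ρ)
    (hχ : 0 ≤ χ) (hχρ : 0 < χ + ρ)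
    (hf0 : ∀ m, 0 ≤ f m) (hg0nonneg : ∀ m, 0 ≤ g m)
    (hg0 : g 0 = 0)
    (M : ℕ) (hfM : ∀ m, M ≤ m → f m = 0) (hgM : ∀ m, M ≤ m → g m = 0)
    (kr : ℕ) (hkr : kr = k ⟨r - 1, by omega⟩)
    (B : ℕ) (hB : B = M + kr + 1)
    -- assumption (F)
    (hF : ∀ m, m ≤ kr → (∀ i : Fin r, m ≠ k i) → f m = 0)
    -- assumption (G1)
    (hG1 : ∑ m ∈ Finset.range B, g m = 1)
    -- assumption (G2)
    (hG2 : ∀ m, m ≤ kr → (∀ i : Fin r, m ≠ k i) → ∀ j : Fin r, g (m - k j) = 0)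
    (lam1 : ℝ)
    (hlam1 : lam1 = ∑ m ∈ Finset.Ico 1 B, (w m * f m + χ * m * g m))
    (A : Matrix (Fin (r + 1)) (Fin (r + 1)) ℝ)
    (hA : ∀ i j : Fin (r + 1),
      A i j =
        if hi : (i : ℕ) < r then
          if hj : (j : ℕ) < r then
            if (i : ℕ) < (j : ℕ) then w (k ⟨j, hj⟩) * f (k ⟨i, hi⟩)
            else if (i : ℕ) = (j : ℕ) then
              w (k ⟨i, hi⟩) * (f (k ⟨i, hi⟩) + g 0 - 1)
            else w (k ⟨j, hj⟩) * (f (k ⟨i, hi⟩) + g (k ⟨i, hi⟩ - k ⟨j, hj⟩))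
          else f (k ⟨i, hi⟩)
        else
          if hj : (j : ℕ) < r then
            w (k ⟨j, hj⟩) *
              ∑ m ∈ Finset.Ico (kr + 1) B, w m * (f m + g (m - k ⟨j, hj⟩))
          else
            ∑ m ∈ Finset.Ico (kr + 1) B, w m * f m
              + ∑ m ∈ Finset.Ico 1 B, χ * m * g m)
    (v : Fin (r + 1) → ℝ)
    (hvdenom : ∀ i : Fin r, lam1 + w (k i) * (1 - g 0) ≠ 0)
    (hv : ∀ i : Fin r,
      v i.castSucc =
        (f (k i) + ∑ j ∈ Finset.univ.filter (fun j : Fin r => j < i),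
            w (k j) * g (k i - k j) * v j.castSucc)
          / (lam1 + w (k i) * (1 - g 0)))
    (hvlast : v (Fin.last r) = 1 - ∑ j : Fin r, w (k j) * v j.castSucc)
    (a : Fin (r + 1) → ℝ)
    (ha : ∀ j : Fin (r + 1), a j = if hj : (j : ℕ) < r then w (k ⟨j, hj⟩) else 1) :
    (∑ j : Fin (r + 1), a j * v j = 1) ∧
    (Polynomial.rootMultiplicity lam1 A.charpoly = 1 →
      ∀ u : Fin (r + 1) → ℝ, A.mulVec u = lam1 • u →
        (∑ j : Fin (r + 1), a j * u j = 1) → u = v) := by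
  classical
  have hkle : ∀ i : Fin r, k i ≤ kr := by
    intro i
    rw [hkr]
    exact hkmono.monotone (by rw [Fin.le_def]; simp; omega)
  have hac : ∀ j : Fin r, a j.castSucc = w (k j) := by
    intro j
    rw [ha]
    simp only [Fin.coe_castSucc]
    rw [dif_pos j.isLt]
  have hal : a (Fin.last r) = 1 := by
    rw [ha]
    simp only [Fin.val_last]
    rw [dif_neg (lt_irrefl r)]
  have part1 : ∑ j : Fin (r + 1), a j * v j = 1 := by
    rw [Fin.sum_univ_castSucc,
      Finset.sum_congr rfl (fun j (_ : j ∈ Finset.univ) => by rw [hac j]), hal, hvlast]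
    ring
  refine ⟨part1, ?_⟩
  intro hsimple u hu hau
  -- matrix entries
  have hAcc : ∀ i j : Fin r, A i.castSucc j.castSucc =
      if (i : ℕ) < (j : ℕ) then w (k j) * f (k i)
      else if (i : ℕ) = (j : ℕ) then w (k i) * (f (k i) + g 0 - 1)
      else w (k j) * (f (k i) + g (k i - k j)) := by
    intro i j
    rw [hA]
    simp only [Fin.coe_castSucc]
    rw [dif_pos i.isLt, dif_pos j.isLt]
  have hAcl : ∀ i : Fin r, A i.castSucc (Fin.last r) = f (k i) := by
    intro i
    rw [hA]
    simp only [Fin.coe_castSucc, Fin.val_last]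
    rw [dif_pos i.isLt, dif_neg (lt_irrefl r)]
  have hAlc : ∀ j : Fin r, A (Fin.last r) j.castSucc =
      w (k j) * ∑ m ∈ Finset.Ico (kr + 1) B, w m * (f m + g (m - k j)) := by
    intro j
    rw [hA]
    simp only [Fin.coe_castSucc, Fin.val_last]
    rw [dif_neg (lt_irrefl r), dif_pos j.isLt]
  have hAll : A (Fin.last r) (Fin.last r) =
      ∑ m ∈ Finset.Ico (kr + 1) B, w m * f m + ∑ m ∈ Finset.Ico 1 B, χ * m * g m := by
    rw [hA]
    simp only [Fin.val_last]
    rw [dif_neg (lt_irrefl r), dif_neg (lt_irrefl r)]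
  -- the recursion, cleared of denominators
  have hrow : ∀ i : Fin r, (lam1 + w (k i)) * v i.castSucc
      = f (k i) + ∑ j ∈ Finset.univ.filter (fun j : Fin r => j < i),
          w (k j) * g (k i - k j) * v j.castSucc := by
    intro i
    have hd : lam1 + w (k i) ≠ 0 := by
      have := hvdenom i
      rwa [hg0, sub_zero, mul_one] at this
    have h1 := hv i
    rw [hg0, sub_zero, mul_one] at h1
    rw [h1, mul_div_cancel₀ _ hd]
  -- generic vanishing-sum lemma
  have hLsum : ∀ h : ℕ → ℝ, (∀ m, 1 ≤ m → m ≤ kr → (∀ i : Fin r, m ≠ k i) → h m = 0) →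
      ∑ m ∈ Finset.Ico 1 (kr + 1), h m = ∑ i : Fin r, h (k i) := by
    intro h hvan
    rw [← Finset.sum_image (g := k) (f := h) (fun i _ j _ hij => hkmono.injective hij)]
    refine (Finset.sum_subset ?_ ?_).symm
    · intro m hm
      simp only [Finset.mem_image, Finset.mem_univ, true_and] at hm
      obtain ⟨i, rfl⟩ := hm
      simp only [Finset.mem_Ico]
      exact ⟨hk1 i, by have := hkle i; omega⟩
    · intro m hm hnm
      simp only [Finset.mem_Ico] at hm
      refine hvan m hm.1 (by omega) ?_
      intro i hi
      exact hnm (Finset.mem_image.mpr ⟨i, Finset.mem_univ i, hi.symm⟩)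
  have hIco1g : ∑ m ∈ Finset.Ico 1 B, g m = 1 := by
    rw [Finset.range_eq_Ico] at hG1
    have hcons := Finset.sum_Ico_consecutive g (Nat.zero_le 1) (by omega : 1 ≤ B)
    have h0 : ∑ m ∈ Finset.Ico 0 1, g m = 0 := by simp [hg0]
    rw [← hcons, h0, zero_add] at hG1
    exact hG1
  -- the key identity for the off-corner entries of the last row
  have hSj : ∀ j : Fin r, ∑ m ∈ Finset.Ico (kr + 1) B, w m * (f m + g (m - k j))
      = lam1 + w (k j) - ((∑ i : Fin r, w (k i) * f (k i))
        + ∑ i : Fin r, (if j < i then w (k i) * g (k i - k j) else 0)) := by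
    intro j
    have hshift : ∑ m ∈ Finset.Ico 1 B, w m * g (m - k j)
        = ∑ m ∈ Finset.Ico 1 B, (w m + χ * k j) * g m := by
      have h1 : ∑ m ∈ Finset.Ico 1 B, w m * g (m - k j)
          = ∑ m ∈ Finset.Ico 1 (B + k j), w m * g (m - k j) := by
        refine Finset.sum_subset (Finset.Ico_subset_Ico le_rfl (by omega)) ?_
        intro m hm hnm
        simp only [Finset.mem_Ico] at hm hnm
        have hmB : B ≤ m := by omega
        have : M ≤ m - k j := by have := hkle j; omega
        rw [hgM _ this, mul_zero]
      have h2 : ∑ m ∈ Finset.Ico (1 + k j) (B + k j), w m * g (m - k j)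
          = ∑ m ∈ Finset.Ico 1 (B + k j), w m * g (m - k j) := by
        refine Finset.sum_subset (Finset.Ico_subset_Ico (by omega) le_rfl) ?_
        intro m hm hnm
        simp only [Finset.mem_Ico] at hm hnm
        have : m - k j = 0 := by omega
        rw [this, hg0, mul_zero]
      rw [h1, ← h2, ← Finset.map_add_right_Ico, Finset.sum_map]
      refine Finset.sum_congr rfl ?_
      intro n _
      simp only [addRightEmbedding_apply]
      rw [Nat.add_sub_cancel, hw, hw]
      push_cast
      ring
    have hU : ∑ m ∈ Finset.Ico 1 B, w m * (f m + g (m - k j)) = lam1 + w (k j) := by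
      calc ∑ m ∈ Finset.Ico 1 B, w m * (f m + g (m - k j))
          = ∑ m ∈ Finset.Ico 1 B, w m * f m + ∑ m ∈ Finset.Ico 1 B, w m * g (m - k j) := by
            rw [← Finset.sum_add_distrib]
            exact Finset.sum_congr rfl (fun m _ => by ring)
        _ = ∑ m ∈ Finset.Ico 1 B, w m * f m + ∑ m ∈ Finset.Ico 1 B, (w m + χ * k j) * g m := by
            rw [hshift]
        _ = ∑ m ∈ Finset.Ico 1 B, (w m * f m + χ * m * g m)
            + ρ * ∑ m ∈ Finset.Ico 1 B, g m + χ * k j * ∑ m ∈ Finset.Ico 1 B, g m := by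
            rw [Finset.mul_sum, Finset.mul_sum, ← Finset.sum_add_distrib, ← Finset.sum_add_distrib,
              ← Finset.sum_add_distrib]
            refine Finset.sum_congr rfl fun m _ => ?_
            rw [hw m]
            ring
        _ = lam1 + w (k j) := by
            rw [hIco1g, hlam1, hw (k j)]
            ring
    have hL : ∑ m ∈ Finset.Ico 1 (kr + 1), w m * (f m + g (m - k j))
        = (∑ i : Fin r, w (k i) * f (k i))
          + ∑ i : Fin r, (if j < i then w (k i) * g (k i - k j) else 0) := by
      rw [hLsum _ (fun m h1 h2 h3 => by rw [hF m h2 h3, hG2 m h2 h3 j, add_zero, mul_zero]),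
        ← Finset.sum_add_distrib]
      refine Finset.sum_congr rfl fun i _ => ?_
      by_cases hij : j < i
      · rw [if_pos hij]
        ring
      · rw [if_neg hij]
        have hle : k i ≤ k j := hkmono.monotone (not_lt.mp hij)
        rw [Nat.sub_eq_zero_of_le hle, hg0]
        ring
    have hcons := Finset.sum_Ico_consecutive (fun m => w m * (f m + g (m - k j)))
      (by omega : 1 ≤ kr + 1) (by omega : kr + 1 ≤ B)
    rw [hL, hU] at hcons
    linarith
  have hLf : ∑ m ∈ Finset.Ico 1 (kr + 1), w m * f m = ∑ i : Fin r, w (k i) * f (k i) :=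
    hLsum _ (fun m h1 h2 h3 => by rw [hF m h2 h3, mul_zero])
  have hT : (∑ m ∈ Finset.Ico (kr + 1) B, w m * f m) + ∑ m ∈ Finset.Ico 1 B, χ * m * g m
      = lam1 - ∑ i : Fin r, w (k i) * f (k i) := by
    have hsplit := Finset.sum_Ico_consecutive (fun m => w m * f m)
      (by omega : 1 ≤ kr + 1) (by omega : kr + 1 ≤ B)
    have hl : lam1 = ∑ m ∈ Finset.Ico 1 B, w m * f m + ∑ m ∈ Finset.Ico 1 B, χ * m * g m := by
      rw [hlam1, Finset.sum_add_distrib]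
    rw [hLf] at hsplit
    linarith
  -- swapping the double sum
  have hD : ∑ j : Fin r, w (k j) * (∑ i : Fin r, if j < i then w (k i) * g (k i - k j) else 0)
        * v j.castSucc
      = ∑ i : Fin r, w (k i) * (∑ jj ∈ Finset.univ.filter (fun jj : Fin r => jj < i),
          w (k jj) * g (k i - k jj) * v jj.castSucc) := by
    have hR : ∀ i : Fin r, w (k i) * (∑ jj ∈ Finset.univ.filter (fun jj : Fin r => jj < i),
          w (k jj) * g (k i - k jj) * v jj.castSucc)
        = ∑ jj : Fin r, (if jj < i then w (k i) * (w (k jj) * g (k i - k jj) * v jj.castSucc)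
            else 0) := by
      intro i
      rw [Finset.sum_filter, Finset.mul_sum]
      refine Finset.sum_congr rfl fun jj _ => ?_
      by_cases h : jj < i <;> simp [h]
    have hLpt : ∀ j : Fin r, w (k j) * (∑ i : Fin r, if j < i then w (k i) * g (k i - k j) else 0)
          * v j.castSucc
        = ∑ i : Fin r, (if j < i then w (k i) * (w (k j) * g (k i - k j) * v j.castSucc)
            else 0) := by
      intro j
      rw [Finset.mul_sum, Finset.sum_mul]
      refine Finset.sum_congr rfl fun i _ => ?_
      by_cases h : j < i
      · rw [if_pos h, if_pos h]
        ring
      · rw [if_neg h, if_neg h]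
        ring
    calc ∑ j : Fin r, w (k j) * (∑ i : Fin r, if j < i then w (k i) * g (k i - k j) else 0)
          * v j.castSucc
        = ∑ j : Fin r, ∑ i : Fin r, (if j < i then
            w (k i) * (w (k j) * g (k i - k j) * v j.castSucc) else 0) :=
          Finset.sum_congr rfl fun j _ => hLpt j
      _ = ∑ i : Fin r, ∑ j : Fin r, (if j < i then
            w (k i) * (w (k j) * g (k i - k j) * v j.castSucc) else 0) := Finset.sum_comm
      _ = _ := (Finset.sum_congr rfl fun i _ => hR i).symm
  -- the eigenvalue equation
  have hAv : A.mulVec v = lam1 • v := by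
    funext i
    simp only [Matrix.mulVec, dotProduct, Pi.smul_apply, smul_eq_mul]
    induction i using Fin.lastCases with
    | last =>
      rw [Fin.sum_univ_castSucc]
      rw [Finset.sum_congr rfl (fun j (_ : j ∈ Finset.univ) => by rw [hAlc j]), hAll]
      have hmain : ∑ j : Fin r, w (k j)
            * (∑ m ∈ Finset.Ico (kr + 1) B, w m * (f m + g (m - k j))) * v j.castSucc
          = (∑ i : Fin r, w (k i) * f (k i)) * v (Fin.last r) := by
        calc ∑ j : Fin r, w (k j)
              * (∑ m ∈ Finset.Ico (kr + 1) B, w m * (f m + g (m - k j))) * v j.castSucc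
            = ∑ j : Fin r, (w (k j) * ((lam1 + w (k j)) * v j.castSucc)
                - (∑ i : Fin r, w (k i) * f (k i)) * (w (k j) * v j.castSucc)
                - w (k j) * (∑ i : Fin r, if j < i then w (k i) * g (k i - k j) else 0)
                  * v j.castSucc) := by
              refine Finset.sum_congr rfl fun j _ => ?_
              rw [hSj j]
              ring
          _ = ∑ j : Fin r, w (k j) * ((lam1 + w (k j)) * v j.castSucc)
              - (∑ i : Fin r, w (k i) * f (k i)) * ∑ j : Fin r, w (k j) * v j.castSucc
              - ∑ j : Fin r, w (k j)
                * (∑ i : Fin r, if j < i then w (k i) * g (k i - k j) else 0) * v j.castSucc := by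
              rw [Finset.sum_sub_distrib, Finset.sum_sub_distrib, Finset.mul_sum]
          _ = (∑ i : Fin r, w (k i) * f (k i)) * v (Fin.last r) := by
              rw [hD]
              have he : ∑ j : Fin r, w (k j) * ((lam1 + w (k j)) * v j.castSucc)
                  = (∑ i : Fin r, w (k i) * f (k i))
                    + ∑ j : Fin r, w (k j)
                      * (∑ jj ∈ Finset.univ.filter (fun jj : Fin r => jj < j),
                        w (k jj) * g (k j - k jj) * v jj.castSucc) := by
                rw [← Finset.sum_add_distrib]
                refine Finset.sum_congr rfl fun j _ => ?_
                rw [hrow j]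
                ring
              rw [he, hvlast]
              ring
      rw [hmain, hT, hvlast]
      ring
    | cast i =>
      rw [Fin.sum_univ_castSucc, hAcl i]
      have hpt : ∀ j : Fin r, A i.castSucc j.castSucc * v j.castSucc
          = f (k i) * (w (k j) * v j.castSucc)
            + (if j < i then w (k j) * g (k i - k j) * v j.castSucc else 0)
            - (if j = i then w (k i) * v i.castSucc else 0) := by
        intro j
        rw [hAcc i j, hg0]
        rcases lt_trichotomy (i : ℕ) (j : ℕ) with h | h | h
        · rw [if_pos h, if_neg (by rw [Fin.lt_def]; omega),
            if_neg (Fin.ne_of_val_ne (by omega))]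
          ring
        · have hji : j = i := Fin.ext h.symm
          subst hji
          rw [if_neg (lt_irrefl _), if_pos rfl, if_neg (lt_irrefl _), if_pos rfl]
          ring
        · rw [if_neg (by omega), if_neg (by omega), if_pos (show j < i from Fin.lt_def.mpr h),
            if_neg (Fin.ne_of_val_ne (by omega))]
          ring
      rw [Finset.sum_congr rfl (fun j (_ : j ∈ Finset.univ) => hpt j),
        Finset.sum_sub_distrib, Finset.sum_add_distrib, ← Finset.mul_sum, ← Finset.sum_filter,
        Finset.sum_ite_eq' Finset.univ i (fun _ => w (k i) * v i.castSucc)]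
      simp only [Finset.mem_univ, if_true]
      linear_combination (-1 : ℝ) * hrow i + f (k i) * hvlast
  -- uniqueness
  by_contra hne
  have hdne : u - v ≠ 0 := sub_ne_zero.mpr hne
  have hAd : A.mulVec (u - v) = lam1 • (u - v) := by
    rw [Matrix.mulVec_sub, hu, hAv, smul_sub]
  have hsum_d : ∑ j : Fin (r + 1), a j * (u - v) j = 0 := by
    have e : ∑ j : Fin (r + 1), a j * (u - v) j
        = ∑ j : Fin (r + 1), a j * u j - ∑ j : Fin (r + 1), a j * v j := by
      rw [← Finset.sum_sub_distrib]
      exact Finset.sum_congr rfl fun j _ => by simp [Pi.sub_apply]; ring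
    rw [e, hau, part1, sub_self]
  have hindep : LinearIndependent ℝ ![v, u - v] := by
    rw [LinearIndependent.pair_iff]
    intro s t hst
    have h1 : ∑ j : Fin (r + 1), a j * (s • v + t • (u - v)) j = s := by
      have e : ∀ j : Fin (r + 1), a j * (s • v + t • (u - v)) j
          = s * (a j * v j) + t * (a j * (u - v) j) := by
        intro j
        simp only [Pi.add_apply, Pi.smul_apply, smul_eq_mul]
        ring
      rw [Finset.sum_congr rfl (fun j _ => e j), Finset.sum_add_distrib,
        ← Finset.mul_sum, ← Finset.mul_sum, part1, hsum_d]
      ring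
    rw [hst] at h1
    simp only [Pi.zero_apply, mul_zero, Finset.sum_const_zero] at h1
    have hs : s = 0 := h1.symm
    subst hs
    rw [zero_smul, zero_add] at hst
    rcases smul_eq_zero.mp hst with ht | hd
    · exact ⟨rfl, ht⟩
    · exact absurd hd hdne
  have h2le := two_le_rootMultiplicity_of_indep A lam1 v (u - v) hAv hAd hindep
  omega
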